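/- (Formal Birkhoff Normal Form, existence) Let ω ∈ ℝ^ℤ be non-resonant and let H = D_ω + Z + R be a formal Hamiltonian with Z ∈ 𝓚 ∩ 𝓕^{≥2} and R ∈ 𝓕^{≥d} for some d ≥ 1. Then there exists S ∈ 𝓕^{≥d} such that e^{{S,·}} H = D_ω + Z̃ with Z̃ ∈ 𝓚 and Z̃ − Z ∈ 𝓚 ∩ 𝓕^{≥d}. -/

import Mathlib

open scoped BigOperators ENNReal

/-- The index set `ℕ^ℤ_f`: finitely supported functions `ℤ → ℕ`. -/
abbrev Idx : Type := ℤ →₀ ℕ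

/-- Coefficient families of formal Hamiltonians. -/
abbrev Coeffs : Type := Idx → Idx → ℂ

/-- `|α| = ∑_j α_j`. -/
def wt (α : Idx) : ℕ := α.sum fun _ n => n

/-- The momentum `π(α,β) = ∑_j j (α_j - β_j)`. -/
def mom (α β : Idx) : ℤ := (α.sum fun j n => j * (n : ℤ)) - (β.sum fun j n => j * (n : ℤ))

/-- Membership in the space `𝓕` of formal Hamiltonians: vanishing of the
constant and linear coefficients, reality and momentum conservation. -/
def InF (H : Coeffs) : Prop :=
  H 0 0 = 0 ∧ H (Finsupp.single 0 1) 0 = 0 ∧ H 0 (Finsupp.single 0 1) = 0 ∧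
    (∀ α β, H α β = (starRingEnd ℂ) (H β α)) ∧ (∀ α β, mom α β ≠ 0 → H α β = 0)

/-- Membership in `𝓕^{≥d}`: supported on pairs with `|α|+|β| ≥ d+2`. -/
def InFge (d : ℕ) (H : Coeffs) : Prop :=
  InF H ∧ ∀ α β, wt α + wt β < d + 2 → H α β = 0

/-- Membership in `𝓚`: supported on the diagonal `{α = β}`. -/
def InK (H : Coeffs) : Prop := InF H ∧ ∀ α β, α ≠ β → H α β = 0

/-- Membership in `𝓡`: supported off the diagonal. -/
def InR (H : Coeffs) : Prop := InF H ∧ ∀ α, H α α = 0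

/-- A single term of the Poisson-bracket double sum `{F,G}_{α,β}`, indexed by
`x = (j, ((α¹,β¹), (α²,β²)))`: it is
`F_{α¹,β¹} G_{α²,β²} (α¹_j β²_j − β¹_j α²_j)` when `π(α¹,β¹) = π(α²,β²) = 0`,
`α = α¹+α²−e_j` and `β = β¹+β²−e_j`, and `0` otherwise. -/
noncomputable def bracketTerm (F G : Coeffs) (α β : Idx)
    (x : ℤ × (Idx × Idx) × (Idx × Idx)) : ℂ :=
  if mom x.2.1.1 x.2.1.2 = 0 ∧ mom x.2.2.1 x.2.2.2 = 0 ∧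
      α = x.2.1.1 + x.2.2.1 - Finsupp.single x.1 1 ∧
      β = x.2.1.2 + x.2.2.2 - Finsupp.single x.1 1 then
    F x.2.1.1 x.2.1.2 * G x.2.2.1 x.2.2.2 *
      ((x.2.1.1 x.1 : ℂ) * (x.2.2.2 x.1 : ℂ) - (x.2.1.2 x.1 : ℂ) * (x.2.2.1 x.1 : ℂ))
  else 0

/-- The Poisson bracket `{F,G}`, defined coefficientwise by
`{F,G}_{α,β} = i ∑_x bracketTerm F G α β x` (a sum with finitely many
nonzero terms, so the `finsum` gives the intended value). -/
noncomputable def bracket (F G : Coeffs) : Coeffs := fun α β =>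
  Complex.I * ∑ᶠ x : ℤ × (Idx × Idx) × (Idx × Idx), bracketTerm F G α β x

/-- Iterates `ad_G^k`. -/
noncomputable def adPow (G : Coeffs) : ℕ → Coeffs → Coeffs
  | 0, H => H
  | k + 1, H => bracket G (adPow G k H)

/-- The formal symplectic change of variables `e^{{G,·}} = ∑_{k≥0} ad_G^k / k!`;
for `G ∈ 𝓕^{≥1}` each coefficient receives only finitely many nonzero
contributions, so the `finsum` gives the intended value. -/
noncomputable def expAd (G H : Coeffs) : Coeffs := fun α β =>
  ∑ᶠ k : ℕ, ((k.factorial : ℂ))⁻¹ * adPow G k H α β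

/-- The quadratic Hamiltonian `D_ω = ∑_j ω_j |u_j|²`, whose only nonzero
coefficients are `(D_ω)_{e_j,e_j} = ω_j`. -/
noncomputable def Dom (ω : ℤ → ℝ) : Coeffs := fun α β =>
  ∑ᶠ j : ℤ, if α = Finsupp.single j 1 ∧ β = Finsupp.single j 1 then (ω j : ℂ) else 0

/-- Non-resonance: every non-trivial finite integer combination of `ω` is nonzero. -/
def NonResonant (ω : ℤ → ℝ) : Prop :=
  ∀ ℓ : ℤ →₀ ℤ, ℓ ≠ 0 → (ℓ.sum fun j c => ω j * (c : ℝ)) ≠ 0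

def msum (α : Idx) : ℤ := α.sum fun j n => j * (n : ℤ)

lemma mom_def (α β : Idx) : mom α β = msum α - msum β := rfl

lemma msum_add (a b : Idx) : msum (a + b) = msum a + msum b := by
  unfold msum
  rw [Finsupp.sum_add_index] <;> intros <;> push_cast <;> ring

lemma msum_single (j : ℤ) : msum (Finsupp.single j 1) = j := by
  unfold msum
  rw [Finsupp.sum_single_index] <;> ring

lemma wt_add (a b : Idx) : wt (a + b) = wt a + wt b := by
  unfold wt
  rw [Finsupp.sum_add_index] <;> intros <;> rfl

lemma wt_single (j : ℤ) : wt (Finsupp.single j 1) = 1 := by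
  unfold wt
  rw [Finsupp.sum_single_index rfl]

lemma mom_add (a b c e : Idx) : mom (a + b) (c + e) = mom a c + mom b e := by
  simp [mom_def, msum_add]; ring

lemma mom_self (a : Idx) : mom a a = 0 := sub_self _

lemma mom_add_cancel (a b c : Idx) : mom (a + c) (b + c) = mom a b := by
  rw [mom_add, mom_self, add_zero]

lemma mom_swap (a b : Idx) : mom b a = - mom a b := by simp [mom_def]

-- exactness of truncated subtraction
lemma sub_exact {γ : Idx} {j : ℤ} (h : 1 ≤ γ j) (α : Idx) (hα : α = γ - Finsupp.single j 1) :
    γ = α + Finsupp.single j 1 := by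
  have hle : Finsupp.single j 1 ≤ γ := Finsupp.single_le_iff.2 h
  rw [hα, tsub_add_cancel_of_le hle]

lemma wt_apply_le (α : Idx) (j : ℤ) : α j ≤ wt α := by
  by_cases h : j ∈ α.support
  · exact Finset.single_le_sum (f := fun i => α i) (fun _ _ => Nat.zero_le _) h
  · simp [Finsupp.notMem_support_iff.1 h]


def SuppGE (m : ℕ) (F : Coeffs) : Prop := ∀ α β, wt α + wt β < m → F α β = 0
def MomS (F : Coeffs) : Prop := ∀ α β, mom α β ≠ 0 → F α β = 0
def RealS (F : Coeffs) : Prop := ∀ α β, F α β = (starRingEnd ℂ) (F β α)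

/-- Anatomy of a nonzero bracket term. -/
lemma bracketTerm_anatomy {F G : Coeffs} {α β : Idx} {x : ℤ × (Idx × Idx) × (Idx × Idx)}
    (h : bracketTerm F G α β x ≠ 0) :
    mom x.2.1.1 x.2.1.2 = 0 ∧ mom x.2.2.1 x.2.2.2 = 0 ∧
    x.2.1.1 + x.2.2.1 = α + Finsupp.single x.1 1 ∧
    x.2.1.2 + x.2.2.2 = β + Finsupp.single x.1 1 ∧
    F x.2.1.1 x.2.1.2 ≠ 0 ∧ G x.2.2.1 x.2.2.2 ≠ 0 ∧
    x.2.1.1 x.1 * x.2.2.2 x.1 ≠ x.2.1.2 x.1 * x.2.2.1 x.1 := by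
  obtain ⟨j, ⟨A, B⟩, ⟨C, D⟩⟩ := x
  unfold bracketTerm at h
  by_cases hc : mom A B = 0 ∧ mom C D = 0 ∧
      α = A + C - Finsupp.single j 1 ∧ β = B + D - Finsupp.single j 1
  swap
  · exact absurd (if_neg hc) h
  rw [if_pos hc] at h
  obtain ⟨h1, h2, h3, h4⟩ := hc
  have hF : F A B ≠ 0 := fun hz => h (by simp [hz])
  have hG : G C D ≠ 0 := fun hz => h (by simp [hz])
  have hfac : (A j : ℂ) * (D j : ℂ) - (B j : ℂ) * (C j : ℂ) ≠ 0 :=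
    fun hz => h (by rw [hz, mul_zero])
  have hfacN : A j * D j ≠ B j * C j := by
    intro he
    apply hfac
    rw [sub_eq_zero]
    exact_mod_cast congrArg (fun n : ℕ => (n : ℂ)) he
  have hAC : 1 ≤ (A + C) j := by
    rw [Finsupp.add_apply]
    rcases Nat.eq_zero_or_pos (A j + C j) with h0 | h
    · exfalso; apply hfacN
      have : A j = 0 ∧ C j = 0 := by omega
      rw [this.1, this.2]; ring
    · exact h
  have hBD : 1 ≤ (B + D) j := by
    rw [Finsupp.add_apply]
    rcases Nat.eq_zero_or_pos (B j + D j) with h0 | h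
    · exfalso; apply hfacN
      have : B j = 0 ∧ D j = 0 := by omega
      rw [this.1, this.2]; ring
    · exact h
  exact ⟨h1, h2, sub_exact hAC α h3, sub_exact hBD β h4, hF, hG, hfacN⟩

/-- value of a term when the condition holds -/
lemma bracketTerm_of_cond {F G : Coeffs} {α β : Idx} {x : ℤ × (Idx × Idx) × (Idx × Idx)}
    (hc : mom x.2.1.1 x.2.1.2 = 0 ∧ mom x.2.2.1 x.2.2.2 = 0 ∧
      α = x.2.1.1 + x.2.2.1 - Finsupp.single x.1 1 ∧
      β = x.2.1.2 + x.2.2.2 - Finsupp.single x.1 1) :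
    bracketTerm F G α β x = F x.2.1.1 x.2.1.2 * G x.2.2.1 x.2.2.2 *
      ((x.2.1.1 x.1 : ℂ) * (x.2.2.2 x.1 : ℂ) - (x.2.1.2 x.1 : ℂ) * (x.2.2.1 x.1 : ℂ)) :=
  if_pos hc

/-- weight bookkeeping for a nonzero term -/
lemma bracketTerm_wt {F G : Coeffs} {α β : Idx} {x : ℤ × (Idx × Idx) × (Idx × Idx)}
    (h : bracketTerm F G α β x ≠ 0) :
    (wt x.2.1.1 + wt x.2.1.2) + (wt x.2.2.1 + wt x.2.2.2) = (wt α + wt β) + 2 := by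
  obtain ⟨-, -, h3, h4, -, -, -⟩ := bracketTerm_anatomy h
  have e1 := congrArg wt h3
  have e2 := congrArg wt h4
  rw [wt_add, wt_add, wt_single] at e1 e2
  omega

/-- momentum bookkeeping for a nonzero term -/
lemma bracketTerm_mom {F G : Coeffs} {α β : Idx} {x : ℤ × (Idx × Idx) × (Idx × Idx)}
    (h : bracketTerm F G α β x ≠ 0) : mom α β = 0 := by
  obtain ⟨h1, h2, h3, h4, -, -, -⟩ := bracketTerm_anatomy h
  have : mom (α + Finsupp.single x.1 1) (β + Finsupp.single x.1 1) = 0 := by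
    rw [← h3, ← h4]
    have := mom_add x.2.1.1 x.2.2.1 x.2.1.2 x.2.2.2
    rw [h1, h2, add_zero] at this
    exact this
  rwa [mom_add_cancel] at this

lemma bracket_momS (F G : Coeffs) : MomS (bracket F G) := by
  intro α β hm
  unfold bracket
  rw [finsum_eq_zero_of_forall_eq_zero, mul_zero]
  intro x
  by_contra h
  exact hm (bracketTerm_mom h)

lemma bracket_suppGE {p q : ℕ} {F G : Coeffs} (hF : SuppGE p F) (hG : SuppGE q G) :
    ∀ α β : Idx, wt α + wt β + 2 < p + q → bracket F G α β = 0 := by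
  intro α β hdeg
  unfold bracket
  rw [finsum_eq_zero_of_forall_eq_zero, mul_zero]
  intro x
  by_contra h
  obtain ⟨-, -, -, -, hFx, hGx, -⟩ := bracketTerm_anatomy h
  have hw := bracketTerm_wt h
  have l1 : p ≤ wt x.2.1.1 + wt x.2.1.2 := by
    by_contra hl; exact hFx (hF _ _ (by omega))
  have l2 : q ≤ wt x.2.2.1 + wt x.2.2.2 := by
    by_contra hl; exact hGx (hG _ _ (by omega))
  omega

/-- congruence: the bracket at degree ≤ N only depends on low-degree entries. -/
lemma bracket_congr {p q N : ℕ} {F F' G G' : Coeffs}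
    (hF : SuppGE p F) (hF' : SuppGE p F') (hG : SuppGE q G) (hG' : SuppGE q G')
    (hFeq : ∀ a b : Idx, wt a + wt b + q ≤ N + 2 → F a b = F' a b)
    (hGeq : ∀ a b : Idx, wt a + wt b + p ≤ N + 2 → G a b = G' a b) :
    ∀ α β : Idx, wt α + wt β ≤ N → bracket F G α β = bracket F' G' α β := by
  intro α β hdeg
  unfold bracket
  congr 1
  apply finsum_congr
  intro x
  by_cases hc : mom x.2.1.1 x.2.1.2 = 0 ∧ mom x.2.2.1 x.2.2.2 = 0 ∧
      α = x.2.1.1 + x.2.2.1 - Finsupp.single x.1 1 ∧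
      β = x.2.1.2 + x.2.2.2 - Finsupp.single x.1 1
  swap
  · unfold bracketTerm; rw [if_neg hc, if_neg hc]
  rw [bracketTerm_of_cond hc, bracketTerm_of_cond hc]
  by_cases hz : bracketTerm F G α β x = 0 ∧ bracketTerm F' G' α β x = 0
  · rw [← bracketTerm_of_cond hc, ← bracketTerm_of_cond hc, hz.1, hz.2]
  -- at least one side is nonzero; get the weight bookkeeping from it
  have hw : (wt x.2.1.1 + wt x.2.1.2) + (wt x.2.2.1 + wt x.2.2.2) = (wt α + wt β) + 2 := by
    rcases not_and_or.1 hz with h | h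
    · exact bracketTerm_wt h
    · obtain ⟨-, -, h3, h4, -, -, -⟩ := bracketTerm_anatomy h
      have e1 := congrArg wt h3
      have e2 := congrArg wt h4
      rw [wt_add, wt_add, wt_single] at e1 e2
      omega
  by_cases hq : q ≤ wt x.2.2.1 + wt x.2.2.2
  · by_cases hp : p ≤ wt x.2.1.1 + wt x.2.1.2
    · rw [hFeq _ _ (by omega), hGeq _ _ (by omega)]
    · rw [hF _ _ (by omega), hF' _ _ (by omega)]; ring
  · rw [hG _ _ (by omega), hG' _ _ (by omega)]; ring

lemma msum_split {A : Idx} {j : ℤ} (h : 1 ≤ A j) :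
    msum A = msum (A - Finsupp.single j 1) + j := by
  have hle : Finsupp.single j 1 ≤ A := Finsupp.single_le_iff.2 h
  conv_lhs => rw [← tsub_add_cancel_of_le hle]
  rw [msum_add, msum_single]

lemma mom_eq_zero_iff {A B : Idx} : mom A B = 0 ↔ msum A = msum B := by
  rw [mom_def, sub_eq_zero]

lemma bracketTerm_support_finite (F G : Coeffs) (α β : Idx) :
    (Function.support (bracketTerm F G α β)).Finite := by
  classical
  set J : Finset ℤ :=
    ((α.support ∪ β.support) ∪
      ((Finset.Iic α ×ˢ Finset.Iic β).image fun p => msum p.2 - msum p.1)) ∪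
      ((Finset.Iic α ×ˢ Finset.Iic β).image fun p => msum p.1 - msum p.2) with hJ
  set big : Finset (ℤ × (Idx × Idx) × (Idx × Idx)) :=
    J.biUnion (fun j =>
      (((Finset.Iic (α + Finsupp.single j 1)) ×ˢ (Finset.Iic (β + Finsupp.single j 1))) ×ˢ
       ((Finset.Iic (α + Finsupp.single j 1)) ×ˢ (Finset.Iic (β + Finsupp.single j 1)))).image
        fun p => (j, p)) with hbig
  apply Set.Finite.subset big.finite_toSet
  rintro ⟨j, ⟨A, B⟩, ⟨C, D⟩⟩ hx
  have h : bracketTerm F G α β (j, (A,B), (C,D)) ≠ 0 := hx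
  obtain ⟨h1, h2, h3, h4, -, -, hfac⟩ := bracketTerm_anatomy h
  simp only at h1 h2 h3 h4 hfac
  have hAC : ∀ i, A i + C i = α i + (Finsupp.single j 1) i := fun i => by
    have := congrArg (fun f : Idx => f i) h3
    simpa [Finsupp.add_apply] using this
  have hBD : ∀ i, B i + D i = β i + (Finsupp.single j 1) i := fun i => by
    have := congrArg (fun f : Idx => f i) h4
    simpa [Finsupp.add_apply] using this
  have hsj : (Finsupp.single j 1 : Idx) j = 1 := by simp
  have hso : ∀ i, j ≠ i → (Finsupp.single j 1 : Idx) i = 0 := fun i hij => by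
    simp [Finsupp.single_apply, hij]
  -- j belongs to J
  have hjJ : j ∈ J := by
    have hprod : A j * D j ≠ 0 ∨ B j * C j ≠ 0 := by
      by_cases hAD : A j * D j = 0
      · right; intro hBC; exact hfac (by rw [hAD, hBC])
      · left; exact hAD
    rcases hprod with hAD | hBC
    · have hA1 : 1 ≤ A j := Nat.pos_of_ne_zero fun h0 => hAD (by rw [h0, zero_mul])
      have hD1 : 1 ≤ D j := Nat.pos_of_ne_zero fun h0 => hAD (by rw [h0, mul_zero])
      by_cases hA : A j ≤ α j
      · have hane : α j ≠ 0 := by omega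
        exact Finset.mem_union_left _ (Finset.mem_union_left _
          (Finset.mem_union_left _ (Finsupp.mem_support_iff.2 hane)))
      · have hACj := hAC j; rw [hsj] at hACj
        have hBDj := hBD j; rw [hsj] at hBDj
        have hBj : B j ≤ β j := by omega
        have hA'le : A - Finsupp.single j 1 ≤ α := by
          rw [Finsupp.le_def]
          intro i
          rcases eq_or_ne j i with rfl | hij
          · rw [Finsupp.tsub_apply, hsj]; omega
          · rw [Finsupp.tsub_apply, hso i hij]
            have := hAC i; rw [hso i hij] at this; omega
        have hBle : B ≤ β := by
          rw [Finsupp.le_def]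
          intro i
          rcases eq_or_ne j i with rfl | hij
          · omega
          · have := hBD i; rw [hso i hij] at this; omega
        have hmsum : msum B - msum (A - Finsupp.single j 1) = j := by
          have hm := mom_eq_zero_iff.1 h1
          rw [msum_split hA1] at hm
          omega
        exact Finset.mem_union_left _ (Finset.mem_union_right _ (Finset.mem_image.2
          ⟨(A - Finsupp.single j 1, B),
            Finset.mem_product.2 ⟨Finset.mem_Iic.2 hA'le, Finset.mem_Iic.2 hBle⟩, hmsum⟩))
    · have hB1 : 1 ≤ B j := Nat.pos_of_ne_zero fun h0 => hBC (by rw [h0, zero_mul])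
      have hC1 : 1 ≤ C j := Nat.pos_of_ne_zero fun h0 => hBC (by rw [h0, mul_zero])
      by_cases hB : B j ≤ β j
      · have hbne : β j ≠ 0 := by omega
        exact Finset.mem_union_left _ (Finset.mem_union_left _
          (Finset.mem_union_right _ (Finsupp.mem_support_iff.2 hbne)))
      · have hACj := hAC j; rw [hsj] at hACj
        have hBDj := hBD j; rw [hsj] at hBDj
        have hAj : A j ≤ α j := by omega
        have hB'le : B - Finsupp.single j 1 ≤ β := by
          rw [Finsupp.le_def]
          intro i
          rcases eq_or_ne j i with rfl | hij
          · rw [Finsupp.tsub_apply, hsj]; omega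
          · rw [Finsupp.tsub_apply, hso i hij]
            have := hBD i; rw [hso i hij] at this; omega
        have hAle : A ≤ α := by
          rw [Finsupp.le_def]
          intro i
          rcases eq_or_ne j i with rfl | hij
          · omega
          · have := hAC i; rw [hso i hij] at this; omega
        have hmsum : msum A - msum (B - Finsupp.single j 1) = j := by
          have hm := mom_eq_zero_iff.1 h1
          rw [msum_split hB1] at hm
          omega
        exact Finset.mem_union_right _ (Finset.mem_image.2
          ⟨(A, B - Finsupp.single j 1),
            Finset.mem_product.2 ⟨Finset.mem_Iic.2 hAle, Finset.mem_Iic.2 hB'le⟩, hmsum⟩)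
  exact Finset.mem_biUnion.2 ⟨j, hjJ, Finset.mem_image.2
    ⟨((A, B), (C, D)),
      Finset.mem_product.2 ⟨Finset.mem_product.2
        ⟨Finset.mem_Iic.2 (h3 ▸ self_le_add_right A C),
         Finset.mem_Iic.2 (h4 ▸ self_le_add_right B D)⟩,
        Finset.mem_product.2
        ⟨Finset.mem_Iic.2 (h3 ▸ self_le_add_left C A),
         Finset.mem_Iic.2 (h4 ▸ self_le_add_left D B)⟩⟩, rfl⟩⟩

lemma bracketTerm_add_left (F F' G : Coeffs) (α β : Idx) (x : ℤ × (Idx × Idx) × (Idx × Idx)) :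
    bracketTerm (F + F') G α β x = bracketTerm F G α β x + bracketTerm F' G α β x := by
  unfold bracketTerm
  split
  · simp [Pi.add_apply]; ring
  · rw [add_zero]

lemma bracket_add_left (F F' G : Coeffs) (α β : Idx) :
    bracket (F + F') G α β = bracket F G α β + bracket F' G α β := by
  unfold bracket
  rw [← mul_add, ← finsum_add_distrib (bracketTerm_support_finite F G α β)
    (bracketTerm_support_finite F' G α β)]
  congr 1
  exact finsum_congr (bracketTerm_add_left F F' G α β)

lemma bracketTerm_add_right (F G G' : Coeffs) (α β : Idx) (x : ℤ × (Idx × Idx) × (Idx × Idx)) :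
    bracketTerm F (G + G') α β x = bracketTerm F G α β x + bracketTerm F G' α β x := by
  unfold bracketTerm
  split
  · simp [Pi.add_apply]; ring
  · rw [add_zero]

lemma bracket_add_right (F G G' : Coeffs) (α β : Idx) :
    bracket F (G + G') α β = bracket F G α β + bracket F G' α β := by
  unfold bracket
  rw [← mul_add, ← finsum_add_distrib (bracketTerm_support_finite F G α β)
    (bracketTerm_support_finite F G' α β)]
  congr 1
  exact finsum_congr (bracketTerm_add_right F G G' α β)


lemma dom_single (ω : ℤ → ℝ) (j : ℤ) :
    Dom ω (Finsupp.single j 1) (Finsupp.single j 1) = (ω j : ℂ) := by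
  unfold Dom
  rw [finsum_eq_single _ j, if_pos ⟨rfl, rfl⟩]
  intro j' hj'
  rw [if_neg]
  rintro ⟨hh, -⟩
  rcases (Finsupp.single_eq_single_iff _ _ _ _).1 hh with ⟨he, -⟩ | ⟨he, -⟩
  · exact hj' he.symm
  · exact one_ne_zero he

lemma dom_eq_zero {ω : ℤ → ℝ} {α β : Idx}
    (h : ∀ j : ℤ, ¬(α = Finsupp.single j 1 ∧ β = Finsupp.single j 1)) : Dom ω α β = 0 := by
  unfold Dom
  exact finsum_eq_zero_of_forall_eq_zero fun j => if_neg (h j)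

lemma dom_ne_zero {ω : ℤ → ℝ} {α β : Idx} (h : Dom ω α β ≠ 0) :
    ∃ j : ℤ, α = Finsupp.single j 1 ∧ β = Finsupp.single j 1 := by
  by_contra hc
  push_neg at hc
  exact h (dom_eq_zero fun j hj => hc j hj.1 hj.2)

lemma dom_offdiag (ω : ℤ → ℝ) {α β : Idx} (h : α ≠ β) : Dom ω α β = 0 := by
  by_contra hc
  obtain ⟨j, h1, h2⟩ := dom_ne_zero hc
  exact h (h1.trans h2.symm)

lemma dom_suppGE (ω : ℤ → ℝ) {α β : Idx} (h : wt α + wt β ≠ 2) : Dom ω α β = 0 := by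
  by_contra hc
  obtain ⟨j, h1, h2⟩ := dom_ne_zero hc
  rw [h1, h2, wt_single] at h
  exact h rfl

lemma dom_momS (ω : ℤ → ℝ) : MomS (Dom ω) := by
  intro α β hm
  by_contra hc
  obtain ⟨j, h1, h2⟩ := dom_ne_zero hc
  rw [h1, h2, mom_self] at hm
  exact hm rfl

lemma dom_realS (ω : ℤ → ℝ) : RealS (Dom ω) := by
  intro α β
  by_cases h : ∃ j : ℤ, α = Finsupp.single j 1 ∧ β = Finsupp.single j 1
  · obtain ⟨j, h1, h2⟩ := h
    rw [h1, h2, dom_single]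
    simp [Complex.conj_ofReal]
  · push_neg at h
    rw [dom_eq_zero fun j hj => h j hj.1 hj.2, dom_eq_zero, map_zero]
    intro j hj
    exact h j hj.2 hj.1


/-- `α - β` as a `ℤ`-valued finsupp. -/
noncomputable def intdiff (α β : Idx) : ℤ →₀ ℤ :=
  α.mapRange (Nat.cast : ℕ → ℤ) Nat.cast_zero - β.mapRange (Nat.cast : ℕ → ℤ) Nat.cast_zero

lemma intdiff_apply (α β : Idx) (i : ℤ) : intdiff α β i = (α i : ℤ) - (β i : ℤ) := by
  unfold intdiff
  rw [Finsupp.sub_apply, Finsupp.mapRange_apply, Finsupp.mapRange_apply]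

lemma intdiff_ne_zero {α β : Idx} (h : α ≠ β) : intdiff α β ≠ 0 := by
  intro hz
  apply h
  ext i
  have := congrArg (fun f : ℤ →₀ ℤ => f i) hz
  simp only [intdiff_apply, Finsupp.coe_zero, Pi.zero_apply] at this
  omega

/-- The real frequency combination `Λ_{αβ} = ∑_j ω_j (α_j - β_j)`. -/
noncomputable def lamR (ω : ℤ → ℝ) (α β : Idx) : ℝ :=
  (intdiff α β).sum fun j c => ω j * (c : ℝ)

lemma lamR_eq_sum (ω : ℤ → ℝ) (α β : Idx) :
    lamR ω α β = ∑ m ∈ α.support ∪ β.support, ω m * ((α m : ℝ) - (β m : ℝ)) := by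
  unfold lamR
  have hsub : (intdiff α β).support ⊆ α.support ∪ β.support := by
    intro i hi
    rw [Finsupp.mem_support_iff, intdiff_apply] at hi
    by_contra hc
    simp only [Finset.mem_union, Finsupp.mem_support_iff, not_or, not_not] at hc
    rw [hc.1, hc.2] at hi
    exact hi (by ring)
  have hzero : ∀ i ∈ α.support ∪ β.support, ω i * ((0 : ℤ) : ℝ) = 0 := by
    intro i _
    rw [Int.cast_zero, mul_zero]
  rw [Finsupp.sum_of_support_subset _ hsub _ hzero]
  apply Finset.sum_congr rfl
  intro m _
  rw [intdiff_apply]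
  push_cast
  ring

lemma lamR_swap (ω : ℤ → ℝ) (α β : Idx) : lamR ω β α = - lamR ω α β := by
  rw [lamR_eq_sum, lamR_eq_sum, Finset.union_comm, ← Finset.sum_neg_distrib]
  apply Finset.sum_congr rfl
  intro m _
  ring

lemma lamR_ne_zero {ω : ℤ → ℝ} (hω : NonResonant ω) {α β : Idx} (h : α ≠ β) :
    lamR ω α β ≠ 0 :=
  hω (intdiff α β) (intdiff_ne_zero h)

lemma bracket_dom {ω : ℤ → ℝ} {X : Coeffs} (hX : MomS X) (α β : Idx) :
    bracket X (Dom ω) α β = Complex.I * (lamR ω α β : ℂ) * X α β := by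
  classical
  by_cases hm : mom α β = 0
  swap
  · rw [hX α β hm, mul_zero]
    unfold bracket
    rw [finsum_eq_zero_of_forall_eq_zero, mul_zero]
    intro x
    by_contra h
    exact hm (bracketTerm_mom h)
  set φ : ℤ → (ℤ × (Idx × Idx) × (Idx × Idx)) :=
    fun m => (m, ((α, β), (Finsupp.single m 1, Finsupp.single m 1))) with hφ
  set s := α.support ∪ β.support with hs
  have hsupp : Function.support (bracketTerm X (Dom ω) α β) ⊆ ↑(s.image φ) := by
    rintro ⟨j, ⟨A, B⟩, ⟨C, D⟩⟩ hx
    have h : bracketTerm X (Dom ω) α β (j, (A,B), (C,D)) ≠ 0 := hx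
    obtain ⟨h1, h2, h3, h4, hFx, hGx, hfac⟩ := bracketTerm_anatomy h
    simp only at h1 h2 h3 h4 hFx hGx hfac
    obtain ⟨m, hC, hD⟩ := dom_ne_zero hGx
    subst hC; subst hD
    have hjm : j = m := by
      by_contra hjm
      apply hfac
      rw [Finsupp.single_apply, if_neg (fun hh : m = j => hjm hh.symm)]
      ring
    subst hjm
    have hA : A = α := by
      have := h3
      rwa [add_right_cancel_iff] at this
    have hB : B = β := by
      have := h4
      rwa [add_right_cancel_iff] at this
    subst hA; subst hB
    have hjmem : j ∈ s := by
      by_contra hjs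
      simp only [hs, Finset.mem_union, Finsupp.mem_support_iff, not_or, not_not] at hjs
      apply hfac
      rw [hjs.1, hjs.2]
    exact Finset.mem_coe.2 (Finset.mem_image.2 ⟨j, hjmem, rfl⟩)
  have hφinj : ∀ a ∈ s, ∀ b ∈ s, φ a = φ b → a = b := by
    intro a _ b _ hab
    exact congrArg Prod.fst hab
  have hval : ∀ m, bracketTerm X (Dom ω) α β (φ m) =
      X α β * (ω m : ℂ) * ((α m : ℂ) - (β m : ℂ)) := by
    intro m
    have hcond : mom α β = 0 ∧ mom (Finsupp.single m 1 : Idx) (Finsupp.single m 1) = 0 ∧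
        α = α + Finsupp.single m 1 - Finsupp.single m 1 ∧
        β = β + Finsupp.single m 1 - Finsupp.single m 1 := by
      refine ⟨hm, mom_self _, ?_, ?_⟩ <;> rw [add_tsub_cancel_right]
    have := bracketTerm_of_cond (F := X) (G := Dom ω) (x := φ m) hcond
    simp only [hφ] at this ⊢
    rw [this, dom_single]
    rw [Finsupp.single_eq_same]
    push_cast
    ring
  unfold bracket
  rw [finsum_eq_sum_of_support_subset _ hsupp, Finset.sum_image hφinj]
  have : ∑ m ∈ s, bracketTerm X (Dom ω) α β (φ m) =
      X α β * ((lamR ω α β : ℝ) : ℂ) := by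
    rw [lamR_eq_sum]
    push_cast
    rw [Finset.mul_sum]
    apply Finset.sum_congr rfl
    intro m _
    rw [hval m]
    ring
  rw [this]
  ring

/-- the swap involution on bracket indices -/
def swapx : (ℤ × (Idx × Idx) × (Idx × Idx)) ≃ (ℤ × (Idx × Idx) × (Idx × Idx)) where
  toFun x := (x.1, ((x.2.1.2, x.2.1.1), (x.2.2.2, x.2.2.1)))
  invFun x := (x.1, ((x.2.1.2, x.2.1.1), (x.2.2.2, x.2.2.1)))
  left_inv := by rintro ⟨j, ⟨a, b⟩, ⟨c, d⟩⟩; rfl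
  right_inv := by rintro ⟨j, ⟨a, b⟩, ⟨c, d⟩⟩; rfl

lemma bracketTerm_swap {F G : Coeffs} (hF : RealS F) (hG : RealS G) (α β : Idx)
    (x : ℤ × (Idx × Idx) × (Idx × Idx)) :
    bracketTerm F G β α (swapx x) = - (starRingEnd ℂ) (bracketTerm F G α β x) := by
  obtain ⟨j, ⟨a, b⟩, ⟨c, d⟩⟩ := x
  unfold bracketTerm swapx
  simp only [Equiv.coe_fn_mk]
  by_cases hc : mom a b = 0 ∧ mom c d = 0 ∧
      α = a + c - Finsupp.single j 1 ∧ β = b + d - Finsupp.single j 1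
  · rw [if_pos hc, if_pos ⟨by rw [mom_swap, hc.1, neg_zero],
      by rw [mom_swap, hc.2.1, neg_zero], hc.2.2.2, hc.2.2.1⟩]
    rw [map_mul, map_mul, map_sub, map_mul, map_mul]
    simp only [Complex.conj_natCast]
    rw [← hF b a, ← hG d c]
    ring
  · rw [if_neg hc, if_neg, map_zero, neg_zero]
    rintro ⟨k1, k2, k3, k4⟩
    exact hc ⟨by rw [← neg_zero, ← k1, ← mom_swap], by rw [← neg_zero, ← k2, ← mom_swap], k4, k3⟩

lemma bracket_realS {F G : Coeffs} (hF : RealS F) (hG : RealS G) : RealS (bracket F G) := by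
  intro α β
  unfold bracket
  have hfin := bracketTerm_support_finite F G β α
  rw [map_mul]
  have : (starRingEnd ℂ) (∑ᶠ x, bracketTerm F G β α x) =
      ∑ᶠ x, (starRingEnd ℂ) (bracketTerm F G β α x) :=
    AddMonoidHom.map_finsum ((starRingEnd ℂ) : ℂ →+* ℂ).toAddMonoidHom hfin
  rw [this]
  have h2 : ∑ᶠ x, (starRingEnd ℂ) (bracketTerm F G β α x) =
      ∑ᶠ x, (starRingEnd ℂ) (bracketTerm F G β α (swapx x)) :=
    (finsum_comp_equiv swapx).symm
  rw [h2]
  have h3 : ∀ x,  (starRingEnd ℂ) (bracketTerm F G β α (swapx x)) = - bracketTerm F G α β x := by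
    intro x
    rw [bracketTerm_swap hF hG α β x, map_neg, Complex.conj_conj]
  rw [finsum_congr h3, finsum_neg_distrib]
  have : (starRingEnd ℂ) Complex.I = - Complex.I := Complex.conj_I
  rw [this]
  ring



lemma suppGE_mono {m m' : ℕ} {X : Coeffs} (h : m' ≤ m) (hX : SuppGE m X) : SuppGE m' X :=
  fun α β hd => hX α β (by omega)

lemma adPow_suppGE {U : Coeffs} {m q : ℕ} (hU : SuppGE (m + 2) U) {X : Coeffs}
    (hX : SuppGE q X) : ∀ k, SuppGE (q + k * m) (adPow U k X) := by
  intro k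
  induction k with
  | zero => simpa [adPow] using hX
  | succ k ih =>
    intro α β hd
    show bracket U (adPow U k X) α β = 0
    apply bracket_suppGE hU ih
    have : (k + 1) * m = k * m + m := Nat.succ_mul k m
    omega

lemma adPow_momS (U X : Coeffs) (hX : MomS X) : ∀ k, MomS (adPow U k X) := by
  intro k
  induction k with
  | zero => exact hX
  | succ k ih => exact bracket_momS U (adPow U k X)

lemma adPow_realS {U X : Coeffs} (hU : RealS U) (hX : RealS X) : ∀ k, RealS (adPow U k X) := by
  intro k
  induction k with
  | zero => exact hX
  | succ k ih => exact bracket_realS hU ih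

lemma adPow_congr {U U' X : Coeffs} {d : ℕ} (hd : 1 ≤ d)
    (hU : SuppGE (d + 2) U) (hU' : SuppGE (d + 2) U') (hX : SuppGE 2 X) {N : ℕ}
    (heq : ∀ a b : Idx, wt a + wt b ≤ N → U a b = U' a b) :
    ∀ k, ∀ α β : Idx, wt α + wt β ≤ N → adPow U k X α β = adPow U' k X α β := by
  intro k
  induction k with
  | zero => intro α β _; rfl
  | succ k ih =>
    intro α β hdeg
    show bracket U (adPow U k X) α β = bracket U' (adPow U' k X) α β
    have hq : SuppGE 2 (adPow U k X) :=
      suppGE_mono (by omega) (adPow_suppGE (m := d) hU hX k)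
    have hq' : SuppGE 2 (adPow U' k X) :=
      suppGE_mono (by omega) (adPow_suppGE (m := d) hU' hX k)
    apply bracket_congr (p := d + 2) (q := 2) hU hU' hq hq' _ _ α β hdeg
    · intro a b hab; exact heq a b (by omega)
    · intro a b hab; exact ih a b (by omega)

lemma adPow_congr2 {U U' X : Coeffs} {d : ℕ} (hd : 1 ≤ d)
    (hU : SuppGE (d + 2) U) (hU' : SuppGE (d + 2) U') (hX : SuppGE 2 X) {N : ℕ}
    (heq : ∀ a b : Idx, wt a + wt b < N → U a b = U' a b) :
    ∀ k, ∀ α β : Idx, wt α + wt β ≤ N → adPow U (k + 2) X α β = adPow U' (k + 2) X α β := by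
  intro k
  induction k with
  | zero =>
    intro α β hdeg
    show bracket U (adPow U 1 X) α β = bracket U' (adPow U' 1 X) α β
    have hq : SuppGE (2 + d) (adPow U 1 X) := by
      have := adPow_suppGE (m := d) hU hX 1; simpa using this
    have hq' : SuppGE (2 + d) (adPow U' 1 X) := by
      have := adPow_suppGE (m := d) hU' hX 1; simpa using this
    apply bracket_congr (p := d + 2) (q := 2 + d) hU hU' hq hq' _ _ α β hdeg
    · intro a b hab; exact heq a b (by omega)
    · intro a b hab
      exact adPow_congr hd hU hU' hX (N := wt a + wt b)
        (fun a' b' h' => heq a' b' (by omega)) 1 a b le_rfl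
  | succ k ih =>
    intro α β hdeg
    show bracket U (adPow U (k + 2) X) α β = bracket U' (adPow U' (k + 2) X) α β
    have hq : SuppGE (2 + (k + 2) * d) (adPow U (k + 2) X) := adPow_suppGE (m := d) hU hX _
    have hq' : SuppGE (2 + (k + 2) * d) (adPow U' (k + 2) X) := adPow_suppGE (m := d) hU' hX _
    apply bracket_congr (p := d + 2) (q := 2 + (k + 2) * d) hU hU' hq hq' _ _ α β hdeg
    · intro a b hab
      exact heq a b (by nlinarith)
    · intro a b hab; exact ih a b (by omega)

lemma expAd_eq_sum {U X : Coeffs} {d : ℕ} (hd : 1 ≤ d) (hU : SuppGE (d + 2) U)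
    (hX : SuppGE 2 X) (α β : Idx) {M : ℕ} (hM : wt α + wt β < 2 + M) :
    expAd U X α β = ∑ k ∈ Finset.range M, ((k.factorial : ℂ))⁻¹ * adPow U k X α β := by
  apply finsum_eq_sum_of_support_subset
  intro k hk
  simp only [Function.mem_support] at hk
  simp only [Finset.coe_range, Set.mem_Iio]
  by_contra hkM
  push_neg at hkM
  apply hk
  have : adPow U k X α β = 0 := by
    apply adPow_suppGE (m := d) hU hX k α β
    have hkd : k ≤ k * d := Nat.le_mul_of_pos_right k hd
    omega
  rw [this, mul_zero]

lemma expAd_momS {U X : Coeffs} (hX : MomS X) : MomS (expAd U X) := by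
  intro α β hm
  unfold expAd
  apply finsum_eq_zero_of_forall_eq_zero
  intro k
  rw [adPow_momS U X hX k α β hm, mul_zero]

lemma expAd_suppGE2 {U X : Coeffs} {d : ℕ} (hd : 1 ≤ d) (hU : SuppGE (d + 2) U)
    (hX : SuppGE 2 X) : SuppGE 2 (expAd U X) := by
  intro α β hdeg
  unfold expAd
  apply finsum_eq_zero_of_forall_eq_zero
  intro k
  rw [suppGE_mono (by omega) (adPow_suppGE (m := d) hU hX k) α β hdeg, mul_zero]

lemma expAd_realS {U X : Coeffs} {d : ℕ} (hd : 1 ≤ d) (hU : SuppGE (d + 2) U)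
    (hX : SuppGE 2 X) (hUr : RealS U) (hXr : RealS X) : RealS (expAd U X) := by
  intro α β
  set M := wt α + wt β + 1 with hM
  rw [expAd_eq_sum (M := M) hd hU hX α β (by omega), expAd_eq_sum (M := M) hd hU hX β α (by omega), map_sum]
  apply Finset.sum_congr rfl
  intro k _
  rw [map_mul, ← adPow_realS hUr hXr k α β]
  congr 1
  rw [map_inv₀, Complex.conj_natCast]

noncomputable def SS (ω : ℤ → ℝ) (d : ℕ) (Z R : Coeffs) : ℕ → Coeffs
  | 0 => fun _ _ => 0
  | N + 1 => fun α β =>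
      if wt α + wt β = N then
        if α ≠ β ∧ mom α β = 0 ∧ d + 2 ≤ N then
          -(expAd (SS ω d Z R N) (Dom ω + Z + R) α β) / (Complex.I * (lamR ω α β : ℂ))
        else 0
      else SS ω d Z R N α β

noncomputable def Sol (ω : ℤ → ℝ) (d : ℕ) (Z R : Coeffs) : Coeffs :=
  fun α β => SS ω d Z R (wt α + wt β + 1) α β

section Construction

variable (ω : ℤ → ℝ) (d : ℕ) (Z R : Coeffs)

lemma SS_high : ∀ N (α β : Idx), N ≤ wt α + wt β → SS ω d Z R N α β = 0 := by
  intro N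
  induction N with
  | zero => intro α β _; rfl
  | succ N ih =>
    intro α β h
    show (if wt α + wt β = N then _ else SS ω d Z R N α β) = 0
    rw [if_neg (by omega)]
    exact ih α β (by omega)

lemma SS_agree : ∀ (N M : ℕ) (α β : Idx), wt α + wt β < N → N ≤ M →
    SS ω d Z R M α β = SS ω d Z R N α β := by
  intro N M
  induction M with
  | zero => intro α β h hM; interval_cases N; rfl
  | succ M ih =>
    intro α β h hM
    rcases Nat.lt_or_ge N (M + 1) with hlt | hge
    · show (if wt α + wt β = M then _ else SS ω d Z R M α β) = _
      rw [if_neg (by omega)]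
      exact ih α β h (by omega)
    · have : N = M + 1 := by omega
      rw [this]

lemma Sol_eq {N : ℕ} {α β : Idx} (h : wt α + wt β < N) :
    Sol ω d Z R α β = SS ω d Z R N α β := by
  unfold Sol
  rcases Nat.lt_or_ge (wt α + wt β + 1) N with hlt | hge
  · rw [SS_agree ω d Z R (wt α + wt β + 1) N α β (by omega) (by omega)]
  · rw [SS_agree ω d Z R N (wt α + wt β + 1) α β h hge]

lemma SS_suppGE : ∀ N, SuppGE (d + 2) (SS ω d Z R N) := by
  intro N
  induction N with
  | zero => intro α β _; rfl
  | succ N ih =>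
    intro α β hd
    show (if wt α + wt β = N then _ else SS ω d Z R N α β) = 0
    by_cases hN : wt α + wt β = N
    · rw [if_pos hN, if_neg]
      rintro ⟨-, -, hge⟩
      omega
    · rw [if_neg hN]
      exact ih α β hd

lemma Sol_suppGE : SuppGE (d + 2) (Sol ω d Z R) := fun α β h =>
  SS_suppGE ω d Z R _ α β h

lemma SS_momS : ∀ N, MomS (SS ω d Z R N) := by
  intro N
  induction N with
  | zero => intro α β _; rfl
  | succ N ih =>
    intro α β hm
    show (if wt α + wt β = N then _ else SS ω d Z R N α β) = 0
    by_cases hN : wt α + wt β = N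
    · rw [if_pos hN, if_neg]
      rintro ⟨-, h0, -⟩
      exact hm h0
    · rw [if_neg hN]
      exact ih α β hm

lemma Sol_momS : MomS (Sol ω d Z R) := fun α β h => SS_momS ω d Z R _ α β h

end Construction

section HFacts

variable {ω : ℤ → ℝ} {d : ℕ} {Z R : Coeffs}

lemma H_suppGE2 (hZ : SuppGE 4 Z) (hR : SuppGE (d + 2) R) (hd : 1 ≤ d) :
    SuppGE 2 (Dom ω + Z + R) := by
  intro α β h
  show Dom ω α β + Z α β + R α β = 0
  rw [dom_suppGE ω (by omega), hZ α β (by omega), hR α β (by omega)]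
  ring

lemma H_momS (hZ : MomS Z) (hR : MomS R) : MomS (Dom ω + Z + R) := by
  intro α β h
  show Dom ω α β + Z α β + R α β = 0
  rw [dom_momS ω α β h, hZ α β h, hR α β h]
  ring

lemma H_realS (hZ : RealS Z) (hR : RealS R) : RealS (Dom ω + Z + R) := by
  intro α β
  show Dom ω α β + Z α β + R α β = _
  rw [dom_realS ω α β, hZ α β, hR α β]
  simp only [Pi.add_apply, map_add]

lemma H_low (hZ : SuppGE 4 Z) (hR : SuppGE (d + 2) R) (hd : 1 ≤ d) :
    ∀ α β : Idx, wt α + wt β ≤ 2 → (Dom ω + Z + R) α β = Dom ω α β := by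
  intro α β h
  show Dom ω α β + Z α β + R α β = Dom ω α β
  rw [hZ α β (by omega), hR α β (by omega)]
  ring

lemma H_offdiag (hZo : ∀ α β : Idx, α ≠ β → Z α β = 0) (hR : SuppGE (d + 2) R) :
    ∀ α β : Idx, α ≠ β → wt α + wt β < d + 2 → (Dom ω + Z + R) α β = 0 := by
  intro α β hne h
  show Dom ω α β + Z α β + R α β = 0
  rw [dom_offdiag ω hne, hZo α β hne, hR α β h]
  ring

lemma SS_realS (hd : 1 ≤ d) (hZ4 : SuppGE 4 Z) (hRs : SuppGE (d + 2) R)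
    (hZr : RealS Z) (hRr : RealS R) :
    ∀ N, RealS (SS ω d Z R N) := by
  intro N
  induction N with
  | zero => intro α β; simp [SS]
  | succ N ih =>
    intro α β
    show (if wt α + wt β = N then _ else SS ω d Z R N α β) =
      (starRingEnd ℂ) (if wt β + wt α = N then _ else SS ω d Z R N β α)
    have hcomm : wt β + wt α = wt α + wt β := by omega
    by_cases hN : wt α + wt β = N
    swap
    · rw [if_neg hN, if_neg (show ¬(wt β + wt α = N) by omega)]
      exact ih α β
    rw [if_pos hN, if_pos (show wt β + wt α = N by omega)]
    by_cases hg : α ≠ β ∧ mom α β = 0 ∧ d + 2 ≤ N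
    swap
    · rw [if_neg hg, if_neg (show ¬(β ≠ α ∧ mom β α = 0 ∧ d + 2 ≤ N) by
        rintro ⟨h1, h2, h3⟩
        exact hg ⟨fun he => h1 he.symm, by rwa [mom_swap, neg_eq_zero] at h2, h3⟩), map_zero]
    rw [if_pos hg, if_pos (show β ≠ α ∧ mom β α = 0 ∧ d + 2 ≤ N from
      ⟨fun he => hg.1 he.symm, by rw [mom_swap, hg.2.1, neg_zero], hg.2.2⟩)]
    have hE := expAd_realS (X := Dom ω + Z + R) hd (SS_suppGE ω d Z R N)
      (H_suppGE2 (ω := ω) hZ4 hRs hd) ih (H_realS (ω := ω) hZr hRr) β α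
    rw [map_div₀, map_neg, hE, Complex.conj_conj, map_mul, Complex.conj_I,
      Complex.conj_ofReal, lamR_swap]
    push_cast
    ring

end HFacts

lemma main_offdiag {ω : ℤ → ℝ} {d : ℕ} {Z R : Coeffs} (hω : NonResonant ω) (hd : 1 ≤ d)
    (hZ4 : SuppGE 4 Z) (hRs : SuppGE (d + 2) R) (hZo : ∀ α β : Idx, α ≠ β → Z α β = 0)
    (hZm : MomS Z) (hRm : MomS R) :
    ∀ α β : Idx, α ≠ β → expAd (Sol ω d Z R) (Dom ω + Z + R) α β = 0 := by
  intro α β hne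
  have hH2 : SuppGE 2 (Dom ω + Z + R) := H_suppGE2 hZ4 hRs hd
  have hHm : MomS (Dom ω + Z + R) := H_momS hZm hRm
  have hSsupp := Sol_suppGE ω d Z R
  have hSm := Sol_momS ω d Z R
  by_cases hmom : mom α β = 0
  swap
  · exact expAd_momS hHm α β hmom
  set N := wt α + wt β with hN
  by_cases hlow : N < d + 2
  · unfold expAd
    apply finsum_eq_zero_of_forall_eq_zero
    intro k
    rcases k with _ | k
    · show _ * adPow (Sol ω d Z R) 0 (Dom ω + Z + R) α β = 0
      rw [show adPow (Sol ω d Z R) 0 (Dom ω + Z + R) = (Dom ω + Z + R) from rfl,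
        H_offdiag hZo hRs α β hne hlow, mul_zero]
    · rw [adPow_suppGE (m := d) hSsupp hH2 (k + 1) α β
        (by have : k ≤ k * d := Nat.le_mul_of_pos_right k hd; rw [Nat.succ_mul]; omega),
        mul_zero]
  push_neg at hlow
  set U := SS ω d Z R N with hU
  have hUsupp : SuppGE (d + 2) U := SS_suppGE ω d Z R N
  have hagree : ∀ a b : Idx, wt a + wt b < N → Sol ω d Z R a b = U a b := fun a b h =>
    Sol_eq ω d Z R h
  have hlam : (lamR ω α β : ℂ) ≠ 0 := Complex.ofReal_ne_zero.2 (lamR_ne_zero hω hne)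
  have hSval : Sol ω d Z R α β =
      -(expAd U (Dom ω + Z + R) α β) / (Complex.I * (lamR ω α β : ℂ)) := by
    rw [Sol_eq ω d Z R (show wt α + wt β < N + 1 by omega)]
    show (if wt α + wt β = N then _ else _) = _
    rw [if_pos hN.symm, if_pos ⟨hne, hmom, hlow⟩]
  -- the one-bracket step
  have hk1 : bracket (Sol ω d Z R) (Dom ω + Z + R) α β =
      bracket U (Dom ω + Z + R) α β +
        Complex.I * (lamR ω α β : ℂ) * Sol ω d Z R α β := by
    set DD : Coeffs := fun a b => Sol ω d Z R a b - U a b with hDD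
    have hSUD : Sol ω d Z R = U + DD := by
      funext a b
      simp [hDD]
    have hDDsupp : SuppGE N DD := by
      intro a b h
      simp [hDD, hagree a b h]
    have hDDm : MomS DD := by
      intro a b h
      have h1 := hSm a b h
      have h2 := SS_momS ω d Z R N a b h
      simp [hDD, h1, show U a b = 0 from h2]
    have hDomGE : SuppGE 2 (Dom ω) := fun a b h => dom_suppGE ω (by omega)
    have step1 : bracket (Sol ω d Z R) (Dom ω + Z + R) α β =
        bracket U (Dom ω + Z + R) α β + bracket DD (Dom ω + Z + R) α β := by
      rw [hSUD, bracket_add_left]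
    have step2 : bracket DD (Dom ω + Z + R) α β = bracket DD (Dom ω) α β := by
      apply bracket_congr (p := N) (q := 2) hDDsupp hDDsupp hH2 hDomGE _ _ α β le_rfl
      · intro a b _; rfl
      · intro a b hab
        exact H_low hZ4 hRs hd a b (by omega)
    have step3 : bracket DD (Dom ω) α β = Complex.I * (lamR ω α β : ℂ) * DD α β :=
      bracket_dom hDDm α β
    have hUzero : U α β = 0 := SS_high ω d Z R N α β (le_of_eq hN)
    rw [step1, step2, step3]
    simp [hDD, hUzero]
  -- compare the two exponential sums
  have hsum : expAd (Sol ω d Z R) (Dom ω + Z + R) α β =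
      expAd U (Dom ω + Z + R) α β +
        Complex.I * (lamR ω α β : ℂ) * Sol ω d Z R α β := by
    rw [expAd_eq_sum (M := N + 1) hd hSsupp hH2 α β (by omega),
      expAd_eq_sum (M := N + 1) hd hUsupp hH2 α β (by omega)]
    have hterm : ∀ k ∈ Finset.range (N + 1),
        ((k.factorial : ℂ))⁻¹ * adPow (Sol ω d Z R) k (Dom ω + Z + R) α β =
        ((k.factorial : ℂ))⁻¹ * adPow U k (Dom ω + Z + R) α β +
          (if k = 1 then Complex.I * (lamR ω α β : ℂ) * Sol ω d Z R α β else 0) := by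
      intro k _
      rcases k with _ | k
      · simp only [if_neg (Nat.zero_ne_one), add_zero]
        rfl
      rcases k with _ | k
      · have : Nat.factorial 1 = 1 := rfl
        rw [if_pos rfl, this]
        push_cast
        rw [inv_one, one_mul, one_mul]
        exact hk1
      · rw [if_neg (by omega), add_zero]
        congr 1
        exact adPow_congr2 hd hSsupp hUsupp hH2 hagree k α β (le_of_eq hN.symm)
    rw [Finset.sum_congr rfl hterm, Finset.sum_add_distrib, Finset.sum_ite_eq' (Finset.range (N + 1)) 1,
      if_pos (Finset.mem_range.2 (by omega))]
  rw [hsum, hSval]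
  field_simp
  ring

lemma Sol_realS {ω : ℤ → ℝ} {d : ℕ} {Z R : Coeffs} (hd : 1 ≤ d) (hZ4 : SuppGE 4 Z)
    (hRs : SuppGE (d + 2) R) (hZr : RealS Z) (hRr : RealS R) : RealS (Sol ω d Z R) := by
  intro α β
  have h1 : Sol ω d Z R α β = SS ω d Z R (wt α + wt β + 1) α β := rfl
  have h2 : Sol ω d Z R β α = SS ω d Z R (wt α + wt β + 1) β α := by
    show SS ω d Z R (wt β + wt α + 1) β α = _
    rw [add_comm (wt β) (wt α)]
  rw [h1, h2]
  exact SS_realS hd hZ4 hRs hZr hRr (wt α + wt β + 1) α β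

lemma expAd_low {ω : ℤ → ℝ} {d : ℕ} {Z R U : Coeffs} (hd : 1 ≤ d)
    (hU : SuppGE (d + 2) U) (hZ4 : SuppGE 4 Z) (hRs : SuppGE (d + 2) R)
    (α β : Idx) (h : wt α + wt β < d + 2) :
    expAd U (Dom ω + Z + R) α β = (Dom ω + Z + R) α β := by
  unfold expAd
  rw [finsum_eq_single _ 0]
  · show ((Nat.factorial 0 : ℂ))⁻¹ * (Dom ω + Z + R) α β = _
    rw [Nat.factorial_zero]
    push_cast
    rw [inv_one, one_mul]
  · intro k hk
    rcases k with _ | k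
    · exact absurd rfl hk
    rw [adPow_suppGE (m := d) hU (H_suppGE2 hZ4 hRs hd) (k + 1) α β
      (by have : k ≤ k * d := Nat.le_mul_of_pos_right k hd; rw [Nat.succ_mul]; omega),
      mul_zero]


lemma wt_zero : wt (0 : Idx) = 0 := rfl

lemma wt_single' : wt (Finsupp.single (0 : ℤ) 1) = 1 := wt_single 0

/-- formal Birkhoff normal form, existence: for non-resonant
`ω` and `H = D_ω + Z + R` with `Z ∈ 𝓚 ∩ 𝓕^{≥2}` and `R ∈ 𝓕^{≥d}`, `d ≥ 1`,
there is `S ∈ 𝓕^{≥d}` with `e^{{S,·}} H = D_ω + Z̃`, `Z̃ ∈ 𝓚` and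
`Z̃ − Z ∈ 𝓚 ∩ 𝓕^{≥d}`. -/
theorem birkhoff_normal_form_exists (ω : ℤ → ℝ) (hω : NonResonant ω)
    (d : ℕ) (hd : 1 ≤ d) (Z R : Coeffs)
    (hZK : InK Z) (hZ2 : InFge 2 Z) (hR : InFge d R) :
    ∃ S Ztil : Coeffs, InFge d S ∧ InK Ztil ∧
      expAd S (Dom ω + Z + R) = Dom ω + Ztil ∧
      InK (Ztil - Z) ∧ InFge d (Ztil - Z) := by
  obtain ⟨⟨hZ00, hZl1, hZl2, hZr, hZm⟩, hZo⟩ := hZK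
  have hZ4 : SuppGE 4 Z := hZ2.2
  obtain ⟨⟨hR00, hRl1, hRl2, hRr, hRm⟩, hRs'⟩ := hR
  have hRs : SuppGE (d + 2) R := hRs'
  set S := Sol ω d Z R with hS
  set E : Coeffs := expAd S (Dom ω + Z + R) with hE
  set Ztil : Coeffs := fun α β => E α β - Dom ω α β with hZt
  have hH2 : SuppGE 2 (Dom ω + Z + R) := H_suppGE2 hZ4 hRs hd
  have hHm : MomS (Dom ω + Z + R) := H_momS hZm hRm
  have hHr : RealS (Dom ω + Z + R) := H_realS hZr hRr
  have hSsupp : SuppGE (d + 2) S := Sol_suppGE ω d Z R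
  have hSm : MomS S := Sol_momS ω d Z R
  have hSr : RealS S := Sol_realS hd hZ4 hRs hZr hRr
  have hoff : ∀ α β : Idx, α ≠ β → E α β = 0 := main_offdiag hω hd hZ4 hRs hZo hZm hRm
  have hE2 : SuppGE 2 E := expAd_suppGE2 hd hSsupp hH2
  have hEr : RealS E := expAd_realS hd hSsupp hH2 hSr hHr
  have hEm : MomS E := expAd_momS hHm
  have hdiag : ∀ α β : Idx, α ≠ β → Ztil α β = 0 := by
    intro α β hne
    simp only [hZt]
    rw [hoff α β hne, dom_offdiag ω hne, sub_zero]
  have hZtr : RealS Ztil := by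
    intro α β
    simp only [hZt]
    rw [map_sub, ← hEr α β, ← dom_realS ω α β]
  have hZtm : MomS Ztil := by
    intro α β hm
    simp only [hZt]
    rw [hEm α β hm, dom_momS ω α β hm, sub_zero]
  have hZt2 : ∀ α β : Idx, wt α + wt β < 2 → Ztil α β = 0 := by
    intro α β h
    simp only [hZt]
    rw [hE2 α β h, dom_suppGE ω (by omega), sub_zero]
  have hZtlow : ∀ α β : Idx, wt α + wt β < d + 2 → Ztil α β = Z α β := by
    intro α β h
    simp only [hZt, hE]
    rw [expAd_low hd hSsupp hZ4 hRs α β h]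
    show Dom ω α β + Z α β + R α β - Dom ω α β = Z α β
    rw [hRs α β h]
    ring
  have hZtInF : InF Ztil := by
    refine ⟨hZt2 0 0 (by rw [wt_zero]; omega),
      hZt2 _ 0 (by rw [wt_single', wt_zero]; omega),
      hZt2 0 _ (by rw [wt_single', wt_zero]; omega), hZtr, hZtm⟩
  refine ⟨S, Ztil, ⟨⟨?_, ?_, ?_, hSr, hSm⟩, fun α β h => hSsupp α β h⟩,
    ⟨hZtInF, hdiag⟩, ?_, ⟨⟨?_, ?_, ?_, ?_, ?_⟩, ?_⟩, ⟨⟨?_, ?_, ?_, ?_, ?_⟩, ?_⟩⟩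
  · exact hSsupp 0 0 (by rw [wt_zero]; omega)
  · exact hSsupp _ 0 (by rw [wt_single', wt_zero]; omega)
  · exact hSsupp 0 _ (by rw [wt_single', wt_zero]; omega)
  · funext α β
    show E α β = Dom ω α β + Ztil α β
    simp only [hZt]
    ring
  · show Ztil 0 0 - Z 0 0 = 0
    rw [hZt2 0 0 (by rw [wt_zero]; omega), hZ00, sub_zero]
  · show Ztil _ 0 - Z _ 0 = 0
    rw [hZt2 _ 0 (by rw [wt_single', wt_zero]; omega), hZl1, sub_zero]
  · show Ztil 0 _ - Z 0 _ = 0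
    rw [hZt2 0 _ (by rw [wt_single', wt_zero]; omega), hZl2, sub_zero]
  · intro α β
    show Ztil α β - Z α β = (starRingEnd ℂ) (Ztil β α - Z β α)
    rw [map_sub, ← hZtr α β, ← hZr α β]
  · intro α β hm
    show Ztil α β - Z α β = 0
    rw [hZtm α β hm, hZm α β hm, sub_zero]
  · intro α β hne
    show Ztil α β - Z α β = 0
    rw [hdiag α β hne, hZo α β hne, sub_zero]
  · show Ztil 0 0 - Z 0 0 = 0
    rw [hZt2 0 0 (by rw [wt_zero]; omega), hZ00, sub_zero]
  · show Ztil _ 0 - Z _ 0 = 0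
    rw [hZt2 _ 0 (by rw [wt_single', wt_zero]; omega), hZl1, sub_zero]
  · show Ztil 0 _ - Z 0 _ = 0
    rw [hZt2 0 _ (by rw [wt_single', wt_zero]; omega), hZl2, sub_zero]
  · intro α β
    show Ztil α β - Z α β = (starRingEnd ℂ) (Ztil β α - Z β α)
    rw [map_sub, ← hZtr α β, ← hZr α β]
  · intro α β hm
    show Ztil α β - Z α β = 0
    rw [hZtm α β hm, hZm α β hm, sub_zero]
  · intro α β h
    show Ztil α β - Z α β = 0
    rw [hZtlow α β h, sub_self]
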